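/- Let b > 1 and 0 < c < 1 be real numbers with ln(b)/ln(c) irrational. Then the set {b^k · c^l : k, l ∈ ℕ, k, l ≥ 1} is dense in the positive reals. -/
import Mathlib

open Real

/-- For irrational θ, the group ℤθ + ℤ has elements in any (0, ε). -/
lemma exists_small_pos_aux (θ : ℝ) (hirr : Irrational θ) {ε : ℝ} (hε : 0 < ε) :
    ∃ m n : ℤ, 0 < m * θ + n ∧ m * θ + n < ε := by
  set S : AddSubgroup ℝ := AddSubgroup.closure {θ, 1} with hS
  rcases S.dense_or_cyclic with hd | ⟨a, ha⟩
  · obtain ⟨s, hsS, hdist⟩ := Metric.mem_closure_iff.1 (hd (ε / 2)) (ε / 2) (by positivity)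
    have hs : 0 < s ∧ s < ε := by
      rw [Real.dist_eq, abs_lt] at hdist
      constructor <;> linarith [hdist.1, hdist.2]
    obtain ⟨m, n, hmn⟩ := AddSubgroup.mem_closure_pair.1 hsS
    simp only [zsmul_eq_mul, mul_one] at hmn
    exact ⟨m, n, by rw [hmn]; exact hs.1, by rw [hmn]; exact hs.2⟩
  · exfalso
    have hθS : θ ∈ S := AddSubgroup.subset_closure (by simp)
    have h1S : (1 : ℝ) ∈ S := AddSubgroup.subset_closure (by simp)
    rw [ha, AddSubgroup.mem_closure_singleton] at hθS h1S
    obtain ⟨p, hp⟩ := hθS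
    obtain ⟨q, hq⟩ := h1S
    have hq0 : q ≠ 0 := by rintro rfl; simp at hq
    have hqR : ((q : ℝ)) ≠ 0 := Int.cast_ne_zero.2 hq0
    have haq : a = 1 / (q : ℝ) := by
      rw [zsmul_eq_mul] at hq
      field_simp
      linarith [hq]
    have : θ = ((p / q : ℚ) : ℝ) := by
      rw [← hp, haq, zsmul_eq_mul]
      push_cast
      ring
    exact hirr ⟨_, this.symm⟩

set_option maxHeartbeats 1000000 in
/-- Key stepping lemma: values K·θ − L with natural K, L ≥ 1 are dense. -/
lemma exists_nat_close (θ : ℝ) (hθ : 0 < θ) (hirr : Irrational θ) (t ε : ℝ) (hε : 0 < ε) :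
    ∃ K L : ℕ, 1 ≤ K ∧ 1 ≤ L ∧ |(K : ℝ) * θ - L - t| < ε := by
  set ε' : ℝ := min (min ε θ) 1 / 2 with hε'def
  have hε'0 : 0 < ε' := by positivity
  have hε'ε : ε' < ε := by
    have : min (min ε θ) 1 ≤ ε := le_trans (min_le_left _ _) (min_le_left _ _)
    linarith
  have hε'θ : ε' < θ := by
    have : min (min ε θ) 1 ≤ θ := le_trans (min_le_left _ _) (min_le_right _ _)
    linarith
  have hε'1 : ε' < 1 := by
    have : min (min ε θ) 1 ≤ 1 := min_le_right _ _
    linarith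
  obtain ⟨m, n, hs0, hsε⟩ := exists_small_pos_aux θ hirr hε'0
  set s : ℝ := m * θ + n with hsdef
  have hs1 : s < 1 := by linarith
  have hm0 : m ≠ 0 := by
    rintro rfl
    simp only [Int.cast_zero, zero_mul, zero_add] at hsdef
    rw [hsdef] at hs0 hsε
    have h0 : (0 : ℤ) < n := by exact_mod_cast hs0
    have h2 : (1 : ℝ) ≤ (n : ℝ) := by exact_mod_cast h0
    linarith
  have hsε' : s < ε' := hsε
  clear_value s
  rcases hm0.lt_or_gt with hm | hm
  · -- m < 0 : k·θ = n − s with k = -m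
    set k : ℕ := (-m).toNat with hkdef
    have hk1 : 1 ≤ k := by omega
    have hkc : (k : ℝ) = -(m : ℝ) := by
      have h : ((-m).toNat : ℤ) = -m := Int.toNat_of_nonneg (by omega)
      exact_mod_cast h
    have hkθ : (k : ℝ) * θ = n - s := by rw [hkc, hsdef]; ring
    have hk1' : (1 : ℝ) ≤ (k : ℝ) := by exact_mod_cast hk1
    have hMpos : (1 : ℝ) ≤ (n : ℝ) := by
      have h0 : (0 : ℝ) < (n : ℝ) := by nlinarith [mul_le_mul_of_nonneg_right hk1' hθ.le]
      have : (0 : ℤ) < n := by exact_mod_cast h0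
      exact_mod_cast this
    clear_value k
    set m0 : ℤ := max 1 (⌊max t (t / (1 - s))⌋ + 1) with hm0def
    have hm01 : 1 ≤ m0 := le_max_left _ _
    have hmax : (⌊max t (t / (1 - s))⌋ : ℝ) + 1 ≤ m0 := by
      exact_mod_cast le_max_right 1 (⌊max t (t / (1 - s))⌋ + 1)
    have hm0t : t < (m0 : ℝ) := by
      have := Int.lt_floor_add_one (max t (t / (1 - s)))
      have h2 : t ≤ max t (t / (1 - s)) := le_max_left _ _
      linarith
    have hm0t' : t / (1 - s) < (m0 : ℝ) := by
      have := Int.lt_floor_add_one (max t (t / (1 - s)))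
      have h2 : t / (1 - s) ≤ max t (t / (1 - s)) := le_max_right _ _
      linarith
    clear_value m0
    set x : ℝ := (m0 : ℝ) - t with hxdef
    have hx0 : 0 < x := by linarith
    clear_value x
    set j : ℕ := (⌊x / s⌋).toNat + 1 with hjdef
    have hjc : (j : ℝ) = (⌊x / s⌋ : ℝ) + 1 := by
      have h : ((⌊x / s⌋.toNat : ℕ) : ℝ) = ((⌊x / s⌋ : ℤ) : ℝ) := by
        exact_mod_cast Int.toNat_of_nonneg (Int.floor_nonneg.2 (by positivity))
      rw [hjdef, Nat.cast_add, Nat.cast_one, h]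
    have hj1 : 1 ≤ j := by omega
    clear_value j
    have hjs1 : x < j * s := by
      rw [hjc]
      have := Int.lt_floor_add_one (x / s)
      calc x = x / s * s := by field_simp
        _ < ((⌊x / s⌋ : ℝ) + 1) * s := mul_lt_mul_of_pos_right this hs0
    have hjs2 : (j : ℝ) * s < x + ε' := by
      rw [hjc]
      have h1 : (⌊x / s⌋ : ℝ) ≤ x / s := Int.floor_le _
      have h2 : x / s * s = x := by field_simp
      nlinarith
    have hjm0 : (m0 : ℝ) < j := by
      have h1s : 0 < 1 - s := by linarith
      have h1 : t < (m0 : ℝ) * (1 - s) := by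
        calc t = t / (1 - s) * (1 - s) := by field_simp
          _ < (m0 : ℝ) * (1 - s) := mul_lt_mul_of_pos_right hm0t' h1s
      have h2 : (m0 : ℝ) * s < x := by rw [hxdef]; nlinarith
      have h3 : (m0 : ℝ) * s < j * s := lt_trans h2 hjs1
      exact lt_of_mul_lt_mul_right h3 hs0.le
    have hjm0' : m0 + 1 ≤ (j : ℤ) := by
      have : (m0 : ℝ) < ((j : ℤ) : ℝ) := by exact_mod_cast hjm0
      have : m0 < (j : ℤ) := by exact_mod_cast this
      omega
    have hMposZ : (1 : ℤ) ≤ n := by exact_mod_cast hMpos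
    set L : ℤ := (j : ℤ) * n - m0 with hLdef
    have hL1 : 1 ≤ L := by nlinarith [hjm0', hMposZ]
    refine ⟨j * k, L.toNat, Nat.one_le_iff_ne_zero.2 (Nat.mul_ne_zero (by omega) (by omega)),
      by omega, ?_⟩
    have hLc : ((L.toNat : ℕ) : ℝ) = (j : ℝ) * n - m0 := by
      have h : (L.toNat : ℤ) = (j : ℤ) * n - m0 := by
        rw [Int.toNat_of_nonneg (by omega), hLdef]
      exact_mod_cast congrArg (fun z : ℤ => (z : ℝ)) h
    have hval : ((j * k : ℕ) : ℝ) * θ - (L.toNat : ℝ) - t = x - j * s := by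
      have h1 : ((j * k : ℕ) : ℝ) = (j : ℝ) * k := by push_cast; ring
      rw [h1, hLc, mul_assoc, hkθ, hxdef]; ring
    rw [hval, abs_lt]
    constructor <;> linarith
  · -- m > 0 : k·θ = -n + s with k = m
    set k : ℕ := m.toNat with hkdef
    have hk1 : 1 ≤ k := by omega
    have hkc : (k : ℝ) = (m : ℝ) := by
      have h : (m.toNat : ℤ) = m := Int.toNat_of_nonneg (by omega)
      exact_mod_cast h
    have hkθ : (k : ℝ) * θ = -n + s := by rw [hkc, hsdef]; ring
    have hk1' : (1 : ℝ) ≤ (k : ℝ) := by exact_mod_cast hk1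
    have hMpos : (1 : ℝ) ≤ -(n : ℝ) := by
      have h0 : (0 : ℝ) < -(n : ℝ) := by nlinarith [mul_le_mul_of_nonneg_right hk1' hθ.le]
      have : (0 : ℤ) < -n := by exact_mod_cast h0
      have : (1 : ℤ) ≤ -n := this
      exact_mod_cast this
    clear_value k
    set m0 : ℤ := max 1 (⌊-t⌋ + 1) with hm0def
    have hm01 : 1 ≤ m0 := le_max_left _ _
    have hm0t : -t < (m0 : ℝ) := by
      have h1 : (⌊-t⌋ : ℝ) + 1 ≤ m0 := by exact_mod_cast le_max_right 1 (⌊-t⌋ + 1)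
      have := Int.lt_floor_add_one (-t)
      linarith
    clear_value m0
    set x : ℝ := t + m0 with hxdef
    have hx0 : 0 < x := by linarith
    clear_value x
    set j : ℕ := (⌊x / s⌋).toNat + 1 with hjdef
    have hjc : (j : ℝ) = (⌊x / s⌋ : ℝ) + 1 := by
      have h : ((⌊x / s⌋.toNat : ℕ) : ℝ) = ((⌊x / s⌋ : ℤ) : ℝ) := by
        exact_mod_cast Int.toNat_of_nonneg (Int.floor_nonneg.2 (by positivity))
      rw [hjdef, Nat.cast_add, Nat.cast_one, h]
    have hj1 : 1 ≤ j := by omega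
    clear_value j
    have hjs1 : x < j * s := by
      rw [hjc]
      have := Int.lt_floor_add_one (x / s)
      calc x = x / s * s := by field_simp
        _ < ((⌊x / s⌋ : ℝ) + 1) * s := mul_lt_mul_of_pos_right this hs0
    have hjs2 : (j : ℝ) * s < x + ε' := by
      rw [hjc]
      have h1 : (⌊x / s⌋ : ℝ) ≤ x / s := Int.floor_le _
      have h2 : x / s * s = x := by field_simp
      nlinarith
    have hMposZ : (1 : ℤ) ≤ -n := by exact_mod_cast hMpos
    set L : ℤ := (j : ℤ) * (-n) + m0 with hLdef
    have hj1Z : (1 : ℤ) ≤ (j : ℤ) := by exact_mod_cast hj1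
    have hL1 : 1 ≤ L := by nlinarith [hMposZ, hj1Z]
    refine ⟨j * k, L.toNat, Nat.one_le_iff_ne_zero.2 (Nat.mul_ne_zero (by omega) (by omega)),
      by omega, ?_⟩
    have hLc : ((L.toNat : ℕ) : ℝ) = (j : ℝ) * (-(n : ℝ)) + m0 := by
      have h : (L.toNat : ℤ) = (j : ℤ) * (-n) + m0 := by
        rw [Int.toNat_of_nonneg (by omega), hLdef]
      exact_mod_cast congrArg (fun z : ℤ => (z : ℝ)) h
    have hval : ((j * k : ℕ) : ℝ) * θ - (L.toNat : ℝ) - t = j * s - x := by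
      have h1 : ((j * k : ℕ) : ℝ) = (j : ℝ) * k := by push_cast; ring
      rw [h1, hLc, mul_assoc, hkθ, hxdef]; ring
    rw [hval, abs_lt]
    constructor <;> linarith

theorem dense_powers_in_pos_reals (b c : ℝ) (hb : 1 < b) (hc0 : 0 < c) (hc1 : c < 1)
    (hirr : Irrational (Real.log b / Real.log c)) :
    Set.Ioi (0 : ℝ) ⊆ closure {x : ℝ | ∃ k l : ℕ, 1 ≤ k ∧ 1 ≤ l ∧ x = b ^ k * c ^ l} := by
  intro x hx
  have hx0 : 0 < x := hx
  have hα : 0 < Real.log b := Real.log_pos hb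
  have hγ : Real.log c < 0 := Real.log_neg hc0 hc1
  set β : ℝ := -Real.log c with hβdef
  have hβ : 0 < β := by rw [hβdef]; linarith
  have hlc : Real.log c = -β := by rw [hβdef]; ring
  set θ : ℝ := Real.log b / β with hθdef
  have hθ0 : 0 < θ := div_pos hα hβ
  have hθirr : Irrational θ := by
    have h : θ = -(Real.log b / Real.log c) := by
      rw [hθdef, hlc, div_neg, neg_neg]
    rw [h]
    exact hirr.neg
  rw [Metric.mem_closure_iff]
  intro ε hε
  obtain ⟨δ, hδ0, hδ⟩ := Metric.continuousAt_iff.1 Real.continuous_exp.continuousAt ε hε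
  obtain ⟨K, L, hK, hL, hclose⟩ :=
    exists_nat_close θ hθ0 hθirr (Real.log x / β) (δ / β) (div_pos hδ0 hβ)
  have hclose' : |(K : ℝ) * Real.log b + L * Real.log c - Real.log x| < δ := by
    have h1 : (K : ℝ) * θ - L - Real.log x / β =
        ((K : ℝ) * Real.log b + L * Real.log c - Real.log x) / β := by
      rw [hθdef, hlc]
      field_simp
      ring
    rw [h1, abs_div, abs_of_pos hβ] at hclose
    calc |(K : ℝ) * Real.log b + L * Real.log c - Real.log x|
        = |(K : ℝ) * Real.log b + L * Real.log c - Real.log x| / β * β := by field_simp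
      _ < δ / β * β := mul_lt_mul_of_pos_right hclose hβ
      _ = δ := by field_simp
  refine ⟨b ^ K * c ^ L, ⟨K, L, hK, hL, rfl⟩, ?_⟩
  have hexp : b ^ K * c ^ L = Real.exp ((K : ℝ) * Real.log b + L * Real.log c) := by
    rw [Real.exp_add, Real.exp_nat_mul, Real.exp_nat_mul, Real.exp_log (by linarith),
      Real.exp_log hc0]
  have hxexp : x = Real.exp (Real.log x) := (Real.exp_log hx0).symm
  rw [hexp]
  have hd := hδ (show dist ((K : ℝ) * Real.log b + L * Real.log c) (Real.log x) < δ by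
    rwa [Real.dist_eq])
  rw [Real.dist_eq] at hd ⊢
  rw [hxexp, abs_sub_comm]
  exact hd
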